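/- Let X be an arbitrary Banach space, Y a Banach space with the metric extension property, and T : X → Y a bounded linear operator. Then for every n ∈ ℕ, αₙ(T) = cₙ(T). -/

import Mathlib

open NormedSpace Metric Filter Topology
open scoped ENNReal Pointwise

/-- The `n`-th approximation number: `αₙ(T) = inf {‖T - A‖ : rank A ≤ n}`. -/
noncomputable def approxNumber {X Y : Type*} [NormedAddCommGroup X] [NormedSpace ℝ X]
    [NormedAddCommGroup Y] [NormedSpace ℝ Y] (n : ℕ) (T : X →L[ℝ] Y) : ℝ :=
  sInf {c : ℝ | ∃ A : X →L[ℝ] Y, FiniteDimensional ℝ (LinearMap.range (A : X →ₗ[ℝ] Y)) ∧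
    Module.finrank ℝ (LinearMap.range (A : X →ₗ[ℝ] Y)) ≤ n ∧ c = ‖T - A‖}

/-- The canonical quotient map `Z → Z ⧸ G` as a continuous linear map. -/
noncomputable def quotCLM {Z : Type*} [NormedAddCommGroup Z] [NormedSpace ℝ Z]
    (G : Submodule ℝ Z) : Z →L[ℝ] Z ⧸ G :=
  ⟨G.mkQ, continuous_quot_mk⟩

/-- The `n`-th Gelfand number: `cₙ(T) = inf {ε > 0 : ∃ a₁,…,aₙ ∈ X*,
    ‖T x‖ ≤ max_i |aᵢ(x)| + ε ‖x‖ for all x}`. -/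
noncomputable def gelfandNumber {X Y : Type*} [NormedAddCommGroup X] [NormedSpace ℝ X]
    [NormedAddCommGroup Y] [NormedSpace ℝ Y] (n : ℕ) (T : X →L[ℝ] Y) : ℝ :=
  sInf {ε : ℝ | 0 < ε ∧ ∃ a : Fin n → StrongDual ℝ X,
    ∀ x : X, ‖T x‖ ≤ (⨆ i, |a i x|) + ε * ‖x‖}

/-- `Y` has the metric extension property: every operator from a closed subspace `M ⊆ Z`
into `Y` extends to `Z` with the same norm. -/
def MetricExtensionProperty (Y : Type v) [NormedAddCommGroup Y] [NormedSpace ℝ Y] : Prop :=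
  ∀ (Z : Type v) [NormedAddCommGroup Z] [NormedSpace ℝ Z] [CompleteSpace Z]
    (M : Submodule ℝ Z), IsClosed (M : Set Z) →
    ∀ T : M →L[ℝ] Y, ∃ S : Z →L[ℝ] Y, (∀ m : M, S m = T m) ∧ ‖S‖ = ‖T‖

set_option synthInstance.maxHeartbeats 1000000
set_option maxHeartbeats 2000000

/-- A finite-rank operator is dominated by finitely many functionals. -/
lemma exists_dual_dominating {X Y : Type*} [NormedAddCommGroup X] [NormedSpace ℝ X]
    [NormedAddCommGroup Y] [NormedSpace ℝ Y] (A : X →L[ℝ] Y)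
    (hfd : FiniteDimensional ℝ (LinearMap.range (A : X →ₗ[ℝ] Y))) {n : ℕ}
    (hr : Module.finrank ℝ (LinearMap.range (A : X →ₗ[ℝ] Y)) ≤ n) :
    ∃ a : Fin n → StrongDual ℝ X, ∀ x, ‖A x‖ ≤ ⨆ i, |a i x| := by
  haveI := hfd
  set C := LinearMap.range (A : X →ₗ[ℝ] Y) with hC
  set m := Module.finrank ℝ C with hm
  let b : Module.Basis (Fin m) ℝ C := Module.finBasis ℝ C
  let e : C ≃L[ℝ] (Fin m → ℝ) := b.equivFun.toContinuousLinearEquiv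
  let Ar : X →L[ℝ] C := A.codRestrict C (fun x => LinearMap.mem_range_self _ x)
  have hc0 : (0:ℝ) ≤ ‖(e.symm : (Fin m → ℝ) →L[ℝ] C)‖ := ContinuousLinearMap.opNorm_nonneg _
  set c := ‖(e.symm : (Fin m → ℝ) →L[ℝ] C)‖ with hc
  refine ⟨fun i => if h : (i : ℕ) < m then
      c • ((ContinuousLinearMap.proj (R := ℝ) (φ := fun _ : Fin m => ℝ) (⟨i, h⟩ : Fin m)).comp
        ((e : C →L[ℝ] (Fin m → ℝ)).comp Ar)) else 0, fun x => ?_⟩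
  set a : Fin n → StrongDual ℝ X := fun i => if h : (i : ℕ) < m then
      c • ((ContinuousLinearMap.proj (R := ℝ) (φ := fun _ : Fin m => ℝ) (⟨i, h⟩ : Fin m)).comp
        ((e : C →L[ℝ] (Fin m → ℝ)).comp Ar)) else 0 with ha
  set S := ⨆ i, |a i x| with hSdef
  have hS0 : 0 ≤ S := Real.iSup_nonneg fun i => abs_nonneg _
  set g : Fin m → ℝ := e (Ar x) with hg
  have key : ∀ j : Fin m, a ⟨(j : ℕ), lt_of_lt_of_le j.isLt hr⟩ x = c * g j := by
    intro j
    have h : ((⟨(j : ℕ), lt_of_lt_of_le j.isLt hr⟩ : Fin n) : ℕ) < m := j.isLt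
    simp only [ha, dif_pos h]
    simp [g, Fin.eta]
  have step1 : ‖A x‖ = ‖e.symm g‖ := by
    have : e.symm g = Ar x := e.symm_apply_apply (Ar x)
    rw [this]
    rfl
  have step2 : ‖e.symm g‖ ≤ c * ‖g‖ := (e.symm : (Fin m → ℝ) →L[ℝ] C).le_opNorm g
  have step3 : c * ‖g‖ ≤ S := by
    have : ‖c • g‖ ≤ S := by
      rw [pi_norm_le_iff_of_nonneg hS0]
      intro j
      have : ‖(c • g) j‖ = |a ⟨(j : ℕ), lt_of_lt_of_le j.isLt hr⟩ x| := by
        rw [key j]; simp [abs_mul, abs_of_nonneg hc0, Real.norm_eq_abs]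
      rw [this]
      exact le_ciSup (f := fun i => |a i x|) (Set.finite_range _).bddAbove _
    calc c * ‖g‖ = ‖c • g‖ := by rw [norm_smul, Real.norm_eq_abs, abs_of_nonneg hc0]
    _ ≤ S := this
  calc ‖A x‖ = ‖e.symm g‖ := step1
  _ ≤ c * ‖g‖ := step2
  _ ≤ S := step3

section Ext

variable {Y : Type v} [NormedAddCommGroup Y] [NormedSpace ℝ Y] [CompleteSpace Y]

local notation "I" => {f : StrongDual ℝ Y // ‖f‖ ≤ 1}

/-- The canonical embedding of `Y` into `ℓ∞` of the dual unit ball, as a linear isometry. -/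
noncomputable def linftyEmbed : Y →ₗᵢ[ℝ] ↥(lp (fun _ : I => ℝ) ⊤) where
  toLinearMap :=
    { toFun := fun y => ⟨fun i => i.1 y, memℓp_infty ⟨‖y‖, by
        rintro r ⟨i, rfl⟩
        calc ‖i.1 y‖ ≤ ‖i.1‖ * ‖y‖ := i.1.le_opNorm y
        _ ≤ 1 * ‖y‖ := by gcongr; exact i.2
        _ = ‖y‖ := one_mul _⟩⟩
      map_add' := fun y z => by ext i; simp; rfl
      map_smul' := fun c y => by ext i; simp }
  norm_map' := fun y => by
    refine le_antisymm (lp.norm_le_of_forall_le (norm_nonneg y) fun i => ?_) ?_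
    · calc ‖i.1 y‖ ≤ ‖i.1‖ * ‖y‖ := i.1.le_opNorm y
      _ ≤ 1 * ‖y‖ := by gcongr; exact i.2
      _ = ‖y‖ := one_mul _
    · rcases eq_or_ne y 0 with rfl | hy
      · rw [norm_zero]; exact norm_nonneg _
      · obtain ⟨f, hf1, hfy⟩ := exists_dual_vector ℝ y (norm_ne_zero_iff.mpr hy)
        have := lp.norm_apply_le_norm (by simp : (⊤ : ENNReal) ≠ 0)
          (⟨fun i => i.1 y, memℓp_infty ⟨‖y‖, by
            rintro r ⟨i, rfl⟩
            calc ‖i.1 y‖ ≤ ‖i.1‖ * ‖y‖ := i.1.le_opNorm y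
            _ ≤ 1 * ‖y‖ := by gcongr; exact i.2
            _ = ‖y‖ := one_mul _⟩⟩ : ↥(lp (fun _ : I => ℝ) ⊤)) ⟨f, hf1.le⟩
        have hfy' : f y = ‖y‖ := by exact_mod_cast hfy
        calc ‖y‖ = ‖f y‖ := by rw [hfy']; exact (abs_of_nonneg (norm_nonneg y)).symm
        _ ≤ _ := this

/-- Universe-free extension property from MEP. -/
theorem MetricExtensionProperty.exists_extension_norm_le
    (hY : MetricExtensionProperty Y)
    {X : Type u} [NormedAddCommGroup X] [NormedSpace ℝ X]
    (M : Submodule ℝ X) (g : M →L[ℝ] Y) :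
    ∃ S : X →L[ℝ] Y, (∀ m : M, S m = g m) ∧ ‖S‖ ≤ ‖g‖ := by
  classical
  let j : Y →ₗᵢ[ℝ] ↥(lp (fun _ : I => ℝ) ⊤) := linftyEmbed
  -- the range of j is a closed subspace of W
  let R : Submodule ℝ ↥(lp (fun _ : I => ℝ) ⊤) := LinearMap.range j.toLinearMap
  have hRclosed : IsClosed (R : Set ↥(lp (fun _ : I => ℝ) ⊤)) := by
    have : (R : Set ↥(lp (fun _ : I => ℝ) ⊤)) = Set.range j := by
      ext w; simp [R, LinearMap.mem_range, Set.mem_range]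
    rw [this]
    exact j.isometry.isClosedEmbedding.isClosed_range
  -- the inverse map on the range
  let equi : Y ≃ₗᵢ[ℝ] R := j.equivRange
  let T' : R →L[ℝ] Y := equi.symm.toLinearIsometry.toContinuousLinearMap
  have hT' : ‖T'‖ ≤ 1 := equi.symm.toLinearIsometry.norm_toContinuousLinearMap_le
  obtain ⟨P, hP, hPn⟩ := hY ↥(lp (fun _ : I => ℝ) ⊤) R hRclosed T'
  have hPle : ‖P‖ ≤ 1 := hPn ▸ hT'
  have hPj : ∀ y : Y, P (j y) = y := by
    intro y
    have h1 : ((equi y : R) : ↥(lp (fun _ : I => ℝ) ⊤)) = j y := rfl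
    have h2 : P ((equi y : R) : ↥(lp (fun _ : I => ℝ) ⊤)) = T' (equi y) := hP (equi y)
    have h3 : T' (equi y) = equi.symm (equi y) := rfl
    rw [h1] at h2
    rw [h2, h3, equi.symm_apply_apply]
  -- Hahn-Banach coordinatewise extension
  have hext : ∀ i : I, ∃ Φ : X →L[ℝ] ℝ, (∀ m : M, Φ m = (i.1.comp g) m) ∧ ‖Φ‖ = ‖i.1.comp g‖ :=
    fun i => exists_extension_norm_eq M (i.1.comp g)
  choose Φ hΦ hΦn using hext
  have hΦle : ∀ i : I, ‖Φ i‖ ≤ ‖g‖ := by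
    intro i
    rw [hΦn i]
    calc ‖i.1.comp g‖ ≤ ‖i.1‖ * ‖g‖ := ContinuousLinearMap.opNorm_comp_le _ _
    _ ≤ 1 * ‖g‖ := by gcongr; exact i.2
    _ = ‖g‖ := one_mul _
  have hmem : ∀ x : X, Memℓp (fun i : I => Φ i x) ⊤ := by
    intro x
    apply memℓp_infty
    refine ⟨‖g‖ * ‖x‖, ?_⟩
    rintro r ⟨i, rfl⟩
    calc ‖Φ i x‖ ≤ ‖Φ i‖ * ‖x‖ := (Φ i).le_opNorm x
    _ ≤ ‖g‖ * ‖x‖ := by gcongr; exact hΦle i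
  let S₀ : X →ₗ[ℝ] ↥(lp (fun _ : I => ℝ) ⊤) :=
    { toFun := fun x => ⟨fun i => Φ i x, hmem x⟩
      map_add' := fun x z => by ext i; simp [lp.coeFn_add]; rfl
      map_smul' := fun c x => by ext i; simp [lp.coeFn_smul] }
  have hS₀bound : ∀ x : X, ‖S₀ x‖ ≤ ‖g‖ * ‖x‖ := by
    intro x
    refine lp.norm_le_of_forall_le (mul_nonneg (ContinuousLinearMap.opNorm_nonneg _) (norm_nonneg _)) fun i => ?_
    calc ‖Φ i x‖ ≤ ‖Φ i‖ * ‖x‖ := (Φ i).le_opNorm x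
    _ ≤ ‖g‖ * ‖x‖ := by gcongr; exact hΦle i
  let S₀c : X →L[ℝ] ↥(lp (fun _ : I => ℝ) ⊤) := S₀.mkContinuous ‖g‖ hS₀bound
  refine ⟨P.comp S₀c, ?_, ?_⟩
  · intro m
    have hSm : S₀c m = j (g m) := by
      apply Subtype.ext
      funext i
      exact hΦ i m
    simp only [ContinuousLinearMap.comp_apply]
    rw [hSm, hPj]
  · calc ‖P.comp S₀c‖ ≤ ‖P‖ * ‖S₀c‖ := ContinuousLinearMap.opNorm_comp_le _ _
    _ ≤ 1 * ‖g‖ := mul_le_mul hPle (S₀.mkContinuous_norm_le (norm_nonneg g) hS₀bound)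
        (ContinuousLinearMap.opNorm_nonneg _) zero_le_one
    _ = ‖g‖ := one_mul _

end Ext

variable {X Y : Type*} [NormedAddCommGroup X] [NormedSpace ℝ X] [CompleteSpace X]
  [NormedAddCommGroup Y] [NormedSpace ℝ Y] [CompleteSpace Y]

/-- If `Y` has the metric extension property, then `αₙ(T) = cₙ(T)` for every operator
`T : X → Y` from an arbitrary Banach space `X`. -/
theorem approxNumber_eq_gelfandNumber (hY : MetricExtensionProperty Y)
    (T : X →L[ℝ] Y) (n : ℕ) :
    approxNumber n T = gelfandNumber n T := by
  have bddA : BddBelow {c : ℝ | ∃ A : X →L[ℝ] Y, FiniteDimensional ℝ (LinearMap.range (A : X →ₗ[ℝ] Y)) ∧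
      Module.finrank ℝ (LinearMap.range (A : X →ₗ[ℝ] Y)) ≤ n ∧ c = ‖T - A‖} := by
    refine ⟨0, fun c hc => ?_⟩
    obtain ⟨A, -, -, rfl⟩ := hc
    exact ContinuousLinearMap.opNorm_nonneg _
  have bddG : BddBelow {ε : ℝ | 0 < ε ∧ ∃ a : Fin n → StrongDual ℝ X,
      ∀ x : X, ‖T x‖ ≤ (⨆ i, |a i x|) + ε * ‖x‖} :=
    ⟨0, fun ε hε => hε.1.le⟩
  have hr0 : LinearMap.range ((0 : X →L[ℝ] Y) : X →ₗ[ℝ] Y) = ⊥ := by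
    ext y; simp [LinearMap.mem_range, eq_comm]
  have neA : Set.Nonempty {c : ℝ | ∃ A : X →L[ℝ] Y, FiniteDimensional ℝ (LinearMap.range (A : X →ₗ[ℝ] Y)) ∧
      Module.finrank ℝ (LinearMap.range (A : X →ₗ[ℝ] Y)) ≤ n ∧ c = ‖T - A‖} := by
    refine ⟨‖T - 0‖, 0, ?_, ?_, rfl⟩
    · rw [hr0]; infer_instance
    · rw [hr0]; simp
  have neG : Set.Nonempty {ε : ℝ | 0 < ε ∧ ∃ a : Fin n → StrongDual ℝ X,
      ∀ x : X, ‖T x‖ ≤ (⨆ i, |a i x|) + ε * ‖x‖} := by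
    refine ⟨‖T‖ + 1, by positivity, fun _ => 0, fun x => ?_⟩
    have h1 : (0:ℝ) ≤ ⨆ _ : Fin n, |(0 : StrongDual ℝ X) x| :=
      Real.iSup_nonneg fun i => abs_nonneg _
    have h2 : ‖T x‖ ≤ ‖T‖ * ‖x‖ := T.le_opNorm x
    have h3 : ‖T‖ * ‖x‖ ≤ (‖T‖ + 1) * ‖x‖ := by
      have := norm_nonneg x; nlinarith
    calc ‖T x‖ ≤ (‖T‖ + 1) * ‖x‖ := h2.trans h3
    _ ≤ (⨆ _ : Fin n, |(0 : StrongDual ℝ X) x|) + (‖T‖ + 1) * ‖x‖ := le_add_of_nonneg_left h1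
  refine le_antisymm (le_csInf neG ?_) (le_csInf neA ?_)
  · rintro ε ⟨hε, a, ha⟩
    -- the common kernel of the functionals
    let Φl : X →ₗ[ℝ] (Fin n → ℝ) := (ContinuousLinearMap.pi a : X →L[ℝ] (Fin n → ℝ))
    let M : Submodule ℝ X := LinearMap.ker (ContinuousLinearMap.pi a : X →ₗ[ℝ] (Fin n → ℝ))
    have hMker : ∀ x ∈ M, ∀ i, a i x = 0 := by
      intro x hx i
      have h0 : (ContinuousLinearMap.pi a) x = 0 := LinearMap.mem_ker.mp hx
      exact congrFun h0 i
    let g : M →L[ℝ] Y := T.comp M.subtypeL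
    have hg : ‖g‖ ≤ ε := by
      refine ContinuousLinearMap.opNorm_le_bound _ hε.le fun m => ?_
      have h1 : ‖T (m : X)‖ ≤ (⨆ i, |a i (m : X)|) + ε * ‖(m : X)‖ := ha m
      have h2 : (⨆ i, |a i (m : X)|) ≤ 0 :=
        Real.iSup_le (fun i => by rw [hMker m m.2 i]; simp) le_rfl
      calc ‖g m‖ = ‖T (m : X)‖ := rfl
      _ ≤ (⨆ i, |a i (m : X)|) + ε * ‖(m : X)‖ := h1
      _ ≤ 0 + ε * ‖(m : X)‖ := by linarith
      _ = ε * ‖m‖ := by rw [zero_add]; rfl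
    obtain ⟨S, hS, hSn⟩ := hY.exists_extension_norm_le M g
    have hker : M ≤ LinearMap.ker ((T - S : X →L[ℝ] Y) : X →ₗ[ℝ] Y) := by
      intro x hx
      rw [LinearMap.mem_ker]
      have h1 : S x = g ⟨x, hx⟩ := hS ⟨x, hx⟩
      have h2 : g ⟨x, hx⟩ = T x := rfl
      show (T - S) x = 0
      rw [ContinuousLinearMap.sub_apply, h1, h2, sub_self]
    -- the quotient X ⧸ M is finite-dimensional of rank ≤ n
    let eq : (X ⧸ M) ≃ₗ[ℝ] ↥(LinearMap.range Φl) := Φl.quotKerEquivRange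
    haveI : FiniteDimensional ℝ (X ⧸ M) := Module.Finite.equiv eq.symm
    have hq : Module.finrank ℝ (X ⧸ M) ≤ n := by
      rw [eq.finrank_eq]
      calc Module.finrank ℝ ↥(LinearMap.range Φl) ≤ Module.finrank ℝ (Fin n → ℝ) :=
        Submodule.finrank_le _
      _ = n := Module.finrank_fin_fun ℝ
    -- the finite-rank operator
    let F : (X ⧸ M) →ₗ[ℝ] Y := M.liftQ ((T - S : X →L[ℝ] Y) : X →ₗ[ℝ] Y) hker
    have hrange : LinearMap.range ((T - S : X →L[ℝ] Y) : X →ₗ[ℝ] Y) = LinearMap.range F :=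
      (Submodule.range_liftQ _ _ _).symm
    have hfd : FiniteDimensional ℝ (LinearMap.range ((T - S : X →L[ℝ] Y) : X →ₗ[ℝ] Y)) := by
      rw [hrange]; exact F.finiteDimensional_range
    have hrk : Module.finrank ℝ (LinearMap.range ((T - S : X →L[ℝ] Y) : X →ₗ[ℝ] Y)) ≤ n := by
      rw [hrange]
      exact (LinearMap.finrank_range_le F).trans hq
    have hle : approxNumber n T ≤ ‖T - (T - S)‖ := csInf_le bddA ⟨T - S, hfd, hrk, rfl⟩
    rw [sub_sub_cancel] at hle
    exact hle.trans (hSn.trans hg)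
  · rintro c ⟨A, hfd, hr, rfl⟩
    refine le_of_forall_pos_le_add fun δ hδ => ?_
    obtain ⟨a, ha⟩ := exists_dual_dominating A hfd hr
    refine csInf_le bddG ⟨add_pos_of_nonneg_of_pos (ContinuousLinearMap.opNorm_nonneg _) hδ,
      a, fun x => ?_⟩
    calc ‖T x‖ = ‖A x + (T - A) x‖ := by
          rw [ContinuousLinearMap.sub_apply, add_sub_cancel]
    _ ≤ ‖A x‖ + ‖(T - A) x‖ := norm_add_le _ _
    _ ≤ (⨆ i, |a i x|) + ‖T - A‖ * ‖x‖ := add_le_add (ha x) ((T - A).le_opNorm x)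
    _ ≤ (⨆ i, |a i x|) + (‖T - A‖ + δ) * ‖x‖ := by
          have := norm_nonneg x; nlinarith
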